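/- If a is a unit vector with a_z = 0 and a·(T_b a) = -1/3, then a = ±(1/√(1+(2√2−3)²)) · (1, 2√2−3, 0) or a = ±(1/√(1+(2√2−3)²)) · (2√2−3, 1, 0). -/

import Mathlib

open Matrix

noncomputable def Tb : Matrix (Fin 3) (Fin 3) ℝ := !![0, 1, 0; 1, 0, 0; 0, 0, -1]

noncomputable def Tc : Matrix (Fin 3) (Fin 3) ℝ :=
  !![-1/2, -1/2, 1/Real.sqrt 2; -1/2, -1/2, -1/Real.sqrt 2; 1/Real.sqrt 2, -1/Real.sqrt 2, 0]

noncomputable def Td1 : Matrix (Fin 3) (Fin 3) ℝ :=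
  !![-1/2, -1/2, 1/Real.sqrt 2; -1/2, -1/2, -1/Real.sqrt 2; -1/Real.sqrt 2, 1/Real.sqrt 2, 0]

noncomputable def Td2 : Matrix (Fin 3) (Fin 3) ℝ :=
  !![-1/2, -1/2, -1/Real.sqrt 2; -1/2, -1/2, 1/Real.sqrt 2; -1/Real.sqrt 2, 1/Real.sqrt 2, 0]

set_option maxHeartbeats 1600000 in
theorem kelvin_solutions (a : Fin 3 → ℝ) (ha : a ⬝ᵥ a = 1) (hz : a 2 = 0)
    (hk : a ⬝ᵥ Tb.mulVec a = -1/3) :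
    let k : ℝ := 1/Real.sqrt (1 + (2*Real.sqrt 2 - 3)^2)
    a = ![k, k*(2*Real.sqrt 2 - 3), 0] ∨ a = -![k, k*(2*Real.sqrt 2 - 3), 0] ∨
    a = ![k*(2*Real.sqrt 2 - 3), k, 0] ∨ a = -![k*(2*Real.sqrt 2 - 3), k, 0] := by
  intro k
  have h2 : Real.sqrt 2 ^ 2 = 2 := Real.sq_sqrt (by norm_num)
  have h2pos : (1:ℝ) < Real.sqrt 2 := by
    nlinarith [Real.sqrt_nonneg 2]
  have harg : (0:ℝ) < 1 + (2*Real.sqrt 2 - 3)^2 := by positivity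
  have hkpos : 0 < k := by
    have := Real.sqrt_pos.mpr harg
    positivity
  have hk2 : k^2 * (18 - 12*Real.sqrt 2) = 1 := by
    have hs : Real.sqrt (1 + (2*Real.sqrt 2 - 3)^2) ^ 2 = 1 + (2*Real.sqrt 2 - 3)^2 :=
      Real.sq_sqrt harg.le
    have hne : Real.sqrt (1 + (2*Real.sqrt 2 - 3)^2) ≠ 0 := by
      positivity
    have : k^2 * (1 + (2*Real.sqrt 2 - 3)^2) = 1 := by
      rw [show k = 1/Real.sqrt (1 + (2*Real.sqrt 2 - 3)^2) from rfl, div_pow, hs]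
      field_simp [harg.ne']
    nlinarith [this, h2]
  norm_num [dotProduct, Matrix.mulVec, Tb, Fin.sum_univ_three, hz] at ha hk
  set x := a 0 with hx
  set y := a 1 with hy
  clear_value k x y
  have hsum : (x + y)^2 = 2/3 := by nlinarith [ha, hk]
  have hdiff : (x - y)^2 = 4/3 := by nlinarith [ha, hk]
  have hu : (k * (2*Real.sqrt 2 - 2))^2 = 2/3 := by nlinarith [hk2, h2]
  have hv : (k * (4 - 2*Real.sqrt 2))^2 = 4/3 := by nlinarith [hk2, h2]
  have hU : x + y = k * (2*Real.sqrt 2 - 2) ∨ x + y = -(k * (2*Real.sqrt 2 - 2)) := by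
    have : (x + y - k * (2*Real.sqrt 2 - 2)) * (x + y + k * (2*Real.sqrt 2 - 2)) = 0 := by
      linear_combination hsum - hu
    rcases mul_eq_zero.mp this with h | h
    · left; linarith
    · right; linarith
  have hV : x - y = k * (4 - 2*Real.sqrt 2) ∨ x - y = -(k * (4 - 2*Real.sqrt 2)) := by
    have : (x - y - k * (4 - 2*Real.sqrt 2)) * (x - y + k * (4 - 2*Real.sqrt 2)) = 0 := by
      linear_combination hdiff - hv
    rcases mul_eq_zero.mp this with h | h
    · left; linarith
    · right; linarith
  rcases hU with h1 | h1 <;> rcases hV with h2' | h2'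
  · left
    funext i; fin_cases i <;> simp [← hx, ← hy, hz] <;> linarith
  · right; right; left
    funext i; fin_cases i <;> simp [← hx, ← hy, hz] <;> linarith
  · right; right; right
    funext i; fin_cases i <;> simp [← hx, ← hy, hz] <;> linarith
  · right; left
    funext i; fin_cases i <;> simp [← hx, ← hy, hz] <;> linarith
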